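/- arXiv:1202.0927 — 2 statements merged into one kernel-verified Lean document; each statement's English description precedes it below -/
import Mathlib

section
/- Let K = k(x) be the rational function field over a differential field k with derivation ∂_x trivial on k and ∂_x(x) = 1. Then every element of K/∂_x(K) has a unique representative of the form Σᵢ bᵢ/(x−cᵢ) with distinct cᵢ ∈ k and nonzero bᵢ ∈ k; equivalently, the k-linear map from the direct sum ⊕_{c∈k} k to K/∂_x(K) sending the basis vector at c to the class of 1/(x−c) is an isomorphism of k-vector spaces. -/
open Polynomial

namespace Stmt11Aux

variable {k : Type*} [Field k]

lemma XsubC_eq (c : k) :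
    RatFunc.X - RatFunc.C c = algebraMap k[X] (RatFunc k) (X - C c) := by
  simp [map_sub, RatFunc.algebraMap_X, RatFunc.algebraMap_C]

lemma XsubC_ne (c : k) : (RatFunc.X - RatFunc.C c : RatFunc k) ≠ 0 := by
  rw [XsubC_eq]; exact RatFunc.algebraMap_ne_zero (X_sub_C_ne_zero c)

lemma d_algebraMap (d : Derivation k (RatFunc k) (RatFunc k)) (hd : d RatFunc.X = 1)
    (p : k[X]) :
    d (algebraMap k[X] (RatFunc k) p) = algebraMap _ _ (derivative p) := by
  induction p using Polynomial.induction_on with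
  | C a =>
    rw [derivative_C, map_zero, RatFunc.algebraMap_C, ← RatFunc.algebraMap_eq_C,
      Derivation.map_algebraMap]
  | add p q hp hq => simp [hp, hq]
  | monomial n a ih =>
    rw [map_mul, RatFunc.algebraMap_C, ← RatFunc.algebraMap_eq_C, Derivation.leibniz,
      Derivation.map_algebraMap, map_pow, RatFunc.algebraMap_X, Derivation.leibniz_pow, hd]
    rw [derivative_C_mul, derivative_X_pow, map_mul, map_mul, map_natCast, map_pow,
      RatFunc.algebraMap_C, RatFunc.algebraMap_X, ← RatFunc.algebraMap_eq_C]
    simp only [smul_zero, add_zero, smul_smul, Algebra.smul_def, map_natCast,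
      Algebra.algebraMap_self, RingHom.id_apply]
    push_cast
    ring

lemma d_XsubC (d : Derivation k (RatFunc k) (RatFunc k)) (hd : d RatFunc.X = 1) (c : k) :
    d (RatFunc.X - RatFunc.C c) = 1 := by
  rw [map_sub, hd, ← RatFunc.algebraMap_eq_C, Derivation.map_algebraMap, sub_zero]

lemma d_num_denom (d : Derivation k (RatFunc k) (RatFunc k)) (hd : d RatFunc.X = 1)
    (f : RatFunc k) :
    d f * algebraMap k[X] (RatFunc k) (f.denom ^ 2)
      = algebraMap _ _ (derivative f.num * f.denom - f.num * derivative f.denom) := by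
  have h0 : algebraMap k[X] (RatFunc k) f.denom ≠ 0 :=
    RatFunc.algebraMap_ne_zero (RatFunc.denom_ne_zero f)
  have h1 : f * algebraMap k[X] (RatFunc k) f.denom = algebraMap _ _ f.num := by
    rw [← eq_div_iff h0]; exact (RatFunc.num_div_denom f).symm
  have h2 := congrArg d h1
  rw [Derivation.leibniz, d_algebraMap d hd, d_algebraMap d hd, smul_eq_mul, smul_eq_mul] at h2
  rw [map_sub, map_mul, map_mul, map_pow, ← h2, ← h1]
  ring

lemma exists_antideriv [CharZero k] (p : k[X]) : ∃ P : k[X], derivative P = p := by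
  induction p using Polynomial.induction_on with
  | C a => exact ⟨C a * X, by simp⟩
  | add p q hp hq =>
    obtain ⟨P, hP⟩ := hp; obtain ⟨Q, hQ⟩ := hq
    exact ⟨P + Q, by simp [hP, hQ]⟩
  | monomial n a _ =>
    refine ⟨C (a / ((n + 2 : ℕ) : k)) * X ^ (n + 2), ?_⟩
    have h2 : ((n + 2 : ℕ) : k) ≠ 0 := (Nat.cast_ne_zero (R := k)).mpr (Nat.succ_ne_zero (n + 1))
    rw [derivative_C_mul, derivative_X_pow, ← mul_assoc, ← C_mul,
      div_mul_cancel₀ _ h2]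
    simp

lemma d_inv_pow [CharZero k] (c : k) (d : Derivation k (RatFunc k) (RatFunc k))
    (hdy : d (RatFunc.X - RatFunc.C c) = 1) (j : ℕ) :
    d ((-(((j : k) + 1)⁻¹)) • ((RatFunc.X - RatFunc.C c) ^ (j + 1))⁻¹)
      = ((RatFunc.X - RatFunc.C c) ^ (j + 2))⁻¹ := by
  have hy := XsubC_ne c
  have hj : ((j : k) + 1) ≠ 0 := Nat.cast_add_one_ne_zero j
  set y := RatFunc.X - RatFunc.C c with hyy
  clear_value y
  refine eq_inv_of_mul_eq_one_left ?_
  rw [Derivation.map_smul, Derivation.leibniz_inv, Derivation.leibniz_pow, hdy]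
  simp only [smul_smul, smul_eq_mul, nsmul_eq_mul, mul_one, RatFunc.smul_eq_C_mul, map_neg,
    map_inv₀, map_add, map_natCast, map_one, Nat.cast_add, Nat.cast_one]
  haveI : CharZero (RatFunc k) :=
    charZero_of_injective_algebraMap (algebraMap k (RatFunc k)).injective
  have h1 : (↑j * y ^ 2 * y ^ (j * 2) + y ^ 2 * y ^ (j * 2) : RatFunc k) ≠ 0 := by
    have : (↑j * y ^ 2 * y ^ (j * 2) + y ^ 2 * y ^ (j * 2) : RatFunc k)
        = ((j : RatFunc k) + 1) * (y ^ 2 * y ^ (j * 2)) := by ring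
    rw [this]
    exact mul_ne_zero (Nat.cast_add_one_ne_zero j)
      (mul_ne_zero (pow_ne_zero _ hy) (pow_ne_zero _ hy))
  field_simp
  rw [Nat.add_sub_cancel]
  ring

lemma split_step (c0 : k) (m : ℕ) (a : k) (v p p₁ : k[X]) (hvne : v ≠ 0)
    (hp₁ : p - C a * v = (X - C c0) * p₁) :
    algebraMap k[X] (RatFunc k) p / algebraMap k[X] (RatFunc k) ((X - C c0) ^ (m + 1) * v)
      = a • ((RatFunc.X - RatFunc.C c0) ^ (m + 1))⁻¹
        + algebraMap k[X] (RatFunc k) p₁ / algebraMap k[X] (RatFunc k) ((X - C c0) ^ m * v) := by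
  have hY : algebraMap k[X] (RatFunc k) (X - C c0) ≠ 0 :=
    RatFunc.algebraMap_ne_zero (X_sub_C_ne_zero c0)
  have hV : algebraMap k[X] (RatFunc k) v ≠ 0 := RatFunc.algebraMap_ne_zero hvne
  have hp : p = C a * v + (X - C c0) * p₁ := by rw [← hp₁]; ring
  rw [XsubC_eq, RatFunc.smul_eq_C_mul, ← RatFunc.algebraMap_C, hp, map_add, map_mul, map_mul,
    map_mul, map_pow, map_mul, map_pow]
  set P1 := algebraMap k[X] (RatFunc k) p₁ with h1
  set V := algebraMap k[X] (RatFunc k) v with h2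
  set Y := algebraMap k[X] (RatFunc k) (X - C c0) with h3
  set Ca := algebraMap k[X] (RatFunc k) (C a) with h4
  clear_value P1 V Y Ca
  field_simp
  ring

/-- Surjectivity core: everything lies in span of simple poles plus derivatives. -/
lemma mem_S [CharZero k] [IsAlgClosed k] (d : Derivation k (RatFunc k) (RatFunc k))
    (hd : d RatFunc.X = 1) (f : RatFunc k) :
    f ∈ (Submodule.span k (Set.range fun c : k => ((RatFunc.X - RatFunc.C c)⁻¹ : RatFunc k)) ⊔
      LinearMap.range (d : RatFunc k →ₗ[k] RatFunc k)) := by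
  set S := (Submodule.span k
      (Set.range fun c : k => ((RatFunc.X - RatFunc.C c)⁻¹ : RatFunc k)) ⊔
      LinearMap.range (d : RatFunc k →ₗ[k] RatFunc k)) with hS
  have hpoly : ∀ p : k[X], algebraMap k[X] (RatFunc k) p ∈ S := by
    intro p
    obtain ⟨P, hP⟩ := exists_antideriv p
    refine Submodule.mem_sup_right ⟨algebraMap k[X] (RatFunc k) P, ?_⟩
    show d _ = _
    rw [d_algebraMap d hd, hP]
  have hgen : ∀ (c a : k) (m : ℕ), a • ((RatFunc.X - RatFunc.C c) ^ (m + 1))⁻¹ ∈ S := by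
    intro c a m
    match m with
    | 0 =>
      refine Submodule.smul_mem _ _ (Submodule.mem_sup_left (Submodule.subset_span ?_))
      exact ⟨c, by rw [pow_one]⟩
    | (j+1) =>
      refine Submodule.smul_mem _ _ (Submodule.mem_sup_right
        ⟨(-(((j : k) + 1)⁻¹)) • ((RatFunc.X - RatFunc.C c) ^ (j + 1))⁻¹, ?_⟩)
      show d _ = _
      rw [d_inv_pow c d (d_XsubC d hd c) j]
  have hconst : ∀ (u : k), u ≠ 0 → ∀ p : k[X],
      algebraMap k[X] (RatFunc k) p / algebraMap k[X] (RatFunc k) (C u) ∈ S := by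
    intro u hu p
    have : algebraMap k[X] (RatFunc k) p / algebraMap k[X] (RatFunc k) (C u)
        = u⁻¹ • algebraMap k[X] (RatFunc k) p := by
      rw [RatFunc.smul_eq_C_mul, RatFunc.algebraMap_C, div_eq_mul_inv, mul_comm, ← map_inv₀]
    rw [this]
    exact Submodule.smul_mem _ _ (hpoly p)
  have key : ∀ (n : ℕ) (q : k[X]), q ≠ 0 → q.natDegree ≤ n → ∀ p : k[X],
      algebraMap k[X] (RatFunc k) p / algebraMap k[X] (RatFunc k) q ∈ S := by
    intro n
    induction n with
    | zero =>
      intro q hq hdeg p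
      obtain ⟨u, hu⟩ := natDegree_eq_zero.mp (Nat.le_zero.mp hdeg)
      subst hu
      exact hconst u (fun h => hq (by rw [h, map_zero])) p
    | succ n IH =>
      intro q hq hdeg p
      by_cases h0 : q.natDegree = 0
      · obtain ⟨u, hu⟩ := natDegree_eq_zero.mp h0
        subst hu
        exact hconst u (fun h => hq (by rw [h, map_zero])) p
      · have hdeg0 : q.degree ≠ 0 := by
          rw [degree_eq_natDegree hq]
          exact_mod_cast h0
        obtain ⟨c0, hc0⟩ := IsAlgClosed.exists_root q hdeg0
        have hn0 : 0 < q.rootMultiplicity c0 := (rootMultiplicity_pos hq).mpr hc0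
        obtain ⟨v, hqv, hvd⟩ := q.exists_eq_pow_rootMultiplicity_mul_and_not_dvd hq c0
        have hv0 : v.eval c0 ≠ 0 := fun h => hvd (dvd_iff_isRoot.mpr h)
        have hvne : v ≠ 0 := fun h => hv0 (by rw [h, eval_zero])
        obtain ⟨m, hm⟩ : ∃ m, q.rootMultiplicity c0 = m + 1 :=
          ⟨q.rootMultiplicity c0 - 1, (Nat.succ_pred_eq_of_pos hn0).symm⟩
        rw [hm] at hqv
        set a := p.eval c0 / v.eval c0 with ha
        have hroot : (p - C a * v).eval c0 = 0 := by
          simp only [eval_sub, eval_mul, eval_C, ha]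
          rw [div_mul_cancel₀ _ hv0, sub_self]
        obtain ⟨p₁, hp₁⟩ := dvd_iff_isRoot.mpr hroot
        have hwne : (X - C c0) ^ m * v ≠ 0 :=
          mul_ne_zero (pow_ne_zero _ (X_sub_C_ne_zero c0)) hvne
        have hdegw : ((X - C c0) ^ m * v).natDegree ≤ n := by
          have h1 : q.natDegree = (m + 1) + v.natDegree := by
            rw [hqv, natDegree_mul (pow_ne_zero _ (X_sub_C_ne_zero c0)) hvne,
              natDegree_pow, natDegree_X_sub_C, mul_one]
          have h2 : ((X - C c0) ^ m * v).natDegree = m + v.natDegree := by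
            rw [natDegree_mul (pow_ne_zero _ (X_sub_C_ne_zero c0)) hvne,
              natDegree_pow, natDegree_X_sub_C, mul_one]
          omega
        rw [hqv, split_step c0 m a v p p₁ hvne hp₁]
        exact Submodule.add_mem _ (hgen c0 a m) (IH _ hwne hdegw p₁)
  have := key f.denom.natDegree f.denom (RatFunc.denom_ne_zero f) le_rfl f.num
  rwa [RatFunc.num_div_denom] at this

/-- Injectivity core. -/
lemma key_inj [CharZero k] (d : Derivation k (RatFunc k) (RatFunc k)) (hd : d RatFunc.X = 1)
    (b : k →₀ k) (g : RatFunc k)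
    (hg : d g = ∑ c ∈ b.support, b c • ((RatFunc.X - RatFunc.C c)⁻¹ : RatFunc k)) :
    b = 0 := by
  classical
  by_contra hb
  obtain ⟨c0, hc0⟩ := Finsupp.support_nonempty_iff.mpr hb
  set s := b.support with hs
  set D : k[X] := ∏ c ∈ s, (X - C c) with hD
  set N : k[X] := ∑ c ∈ s, C (b c) * ∏ c' ∈ s.erase c, (X - C c') with hN
  set E : k[X] := ∏ c' ∈ s.erase c0, (X - C c') with hE
  -- clearing denominators of the sum of simple fractions
  have hFD : (∑ c ∈ s, b c • ((RatFunc.X - RatFunc.C c)⁻¹ : RatFunc k))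
      * algebraMap k[X] (RatFunc k) D = algebraMap k[X] (RatFunc k) N := by
    rw [hD, hN, map_sum, Finset.sum_mul, map_prod]
    refine Finset.sum_congr rfl fun c hc => ?_
    rw [map_mul, map_prod, RatFunc.algebraMap_C, ← RatFunc.smul_eq_C_mul, smul_mul_assoc,
      ← Finset.mul_prod_erase _ _ hc]
    congr 1
    rw [← XsubC_eq, inv_mul_cancel_left₀ (XsubC_ne c)]
  set p := g.num with hp
  set q := g.denom with hq
  have hpoly : N * q ^ 2 = (derivative p * q - p * derivative q) * D := by
    apply RatFunc.algebraMap_injective k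
    rw [map_mul, map_mul, ← hFD, ← hg, ← d_num_denom d hd g]
    ring
  have hE0 : E.eval c0 ≠ 0 := by
    rw [hE, eval_prod]
    exact Finset.prod_ne_zero_iff.mpr fun c' hc' => by
      simp only [eval_sub, eval_X, eval_C]
      exact sub_ne_zero.mpr (Finset.ne_of_mem_erase hc').symm
  have hDc0 : D = (X - C c0) * E := (Finset.mul_prod_erase _ _ hc0).symm
  have hN0 : N.eval c0 ≠ 0 := by
    have hsum : N.eval c0 = (C (b c0) * ∏ c' ∈ s.erase c0, (X - C c')).eval c0 := by
      rw [hN, eval_finset_sum]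
      refine Finset.sum_eq_single c0 (fun c hc hne => ?_) (fun h => absurd hc0 h)
      rw [eval_mul, eval_prod]
      refine mul_eq_zero_of_right _
        (Finset.prod_eq_zero (Finset.mem_erase.mpr ⟨Ne.symm hne, hc0⟩) ?_)
      simp
    rw [hsum, eval_mul, eval_C]
    exact mul_ne_zero (Finsupp.mem_support_iff.mp hc0) hE0
  by_cases hq0 : q.eval c0 = 0
  · -- q vanishes at c0 : pole of order ≥ 1, derivative has pole of order ≥ 2
    have hqne : q ≠ 0 := RatFunc.denom_ne_zero g
    have hn0 : 0 < q.rootMultiplicity c0 := (rootMultiplicity_pos hqne).mpr hq0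
    obtain ⟨v, hqv, hvd⟩ := q.exists_eq_pow_rootMultiplicity_mul_and_not_dvd hqne c0
    have hv0 : v.eval c0 ≠ 0 := fun h => hvd (dvd_iff_isRoot.mpr h)
    obtain ⟨m, hm⟩ : ∃ m, q.rootMultiplicity c0 = m + 1 :=
      ⟨q.rootMultiplicity c0 - 1, (Nat.succ_pred_eq_of_pos hn0).symm⟩
    rw [hm] at hqv
    have hp0 : p.eval c0 ≠ 0 := by
      obtain ⟨α, β, hαβ⟩ := RatFunc.isCoprime_num_denom g
      intro h
      have := congrArg (eval c0) hαβ
      rw [eval_add, eval_mul, eval_mul, eval_one, ← hp, ← hq, h, hq0, mul_zero, mul_zero,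
        add_zero] at this
      exact zero_ne_one this
    set B : k[X] := (X - C c0) * (derivative p * v - p * derivative v)
      - C ((m + 1 : ℕ) : k) * (p * v) with hB
    have hkey : derivative p * q - p * derivative q = (X - C c0) ^ m * B := by
      rw [hqv, derivative_mul, derivative_pow, derivative_sub, derivative_X, derivative_C,
        sub_zero, hB]
      simp only [Nat.add_sub_cancel, mul_one, C_eq_natCast]
      ring
    have hB0 : B.eval c0 ≠ 0 := by
      rw [hB, eval_sub, eval_mul, eval_mul, eval_mul, eval_sub, eval_X, eval_C, eval_C,
        sub_self, zero_mul, zero_sub, neg_ne_zero]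
      exact mul_ne_zero ((Nat.cast_ne_zero (R := k)).mpr (Nat.succ_ne_zero m))
        (mul_ne_zero hp0 hv0)
    have hc2 : (X - C c0) ^ (m + 1) * (N * (X - C c0) ^ (m + 1) * v ^ 2)
        = (X - C c0) ^ (m + 1) * (B * E) := by
      have h := hpoly
      rw [hkey, hqv, hDc0] at h
      linear_combination h
    have hc3 := mul_left_cancel₀ (pow_ne_zero (m + 1) (X_sub_C_ne_zero c0)) hc2
    have := congrArg (eval c0) hc3
    rw [eval_mul, eval_mul, eval_mul, eval_pow, eval_sub, eval_X, eval_C, sub_self,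
      zero_pow (Nat.succ_ne_zero m), mul_zero, zero_mul] at this
    exact mul_ne_zero hB0 hE0 this.symm
  · -- q does not vanish at c0 : no pole, but the fraction sum has one
    have h := congrArg (eval c0) hpoly
    rw [hDc0] at h
    simp only [eval_mul, eval_pow, eval_sub, eval_X, eval_C, sub_self, zero_mul,
      mul_zero] at h
    exact mul_ne_zero hN0 (pow_ne_zero 2 hq0) h

end Stmt11Aux

/-- let `K = k(x)` over an algebraically closed field `k` of characteristic
zero, with `∂_x` the derivation trivial on `k` and `∂_x(x) = 1`.  The `k`-linear map
`⊕_{c ∈ k} k → K/∂_x(K)` sending the basis vector at `c` to the class of `1/(x−c)` is an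
isomorphism of `k`-vector spaces (equivalently, every class has a unique representative
`Σᵢ bᵢ/(x−cᵢ)`). -/
theorem stmt11 (k : Type*) [Field k] [CharZero k] [IsAlgClosed k]
    (d : Derivation k (RatFunc k) (RatFunc k)) (hd : d RatFunc.X = 1) :
    Function.Bijective
      (Finsupp.linearCombination k
        (fun c : k =>
          Submodule.Quotient.mk (p := LinearMap.range (d : RatFunc k →ₗ[k] RatFunc k))
            ((RatFunc.X - RatFunc.C c)⁻¹))) := by
  set R := LinearMap.range (d : RatFunc k →ₗ[k] RatFunc k) with hR
  set gen := fun c : k => ((RatFunc.X - RatFunc.C c)⁻¹ : RatFunc k) with hgen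
  constructor
  · rw [injective_iff_map_eq_zero]
    intro b hb
    have h3 : R.mkQ (Finsupp.linearCombination k gen b) = 0 := by
      rw [Finsupp.apply_linearCombination]
      exact hb
    rw [Submodule.mkQ_apply, Submodule.Quotient.mk_eq_zero] at h3
    obtain ⟨g, hg⟩ := h3
    rw [Finsupp.linearCombination_apply, Finsupp.sum] at hg
    exact Stmt11Aux.key_inj d hd b g hg
  · rw [← LinearMap.range_eq_top, Finsupp.range_linearCombination, Submodule.eq_top_iff']
    intro y
    obtain ⟨z, rfl⟩ := Submodule.Quotient.mk_surjective R y
    have hz := Stmt11Aux.mem_S d hd z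
    rw [Submodule.mem_sup] at hz
    obtain ⟨u, hu, w, hw, rfl⟩ := hz
    have hmk : Submodule.Quotient.mk (p := R) (u + w) = R.mkQ u + R.mkQ w := map_add R.mkQ u w
    have hw0 : R.mkQ w = 0 := (Submodule.Quotient.mk_eq_zero R).mpr hw
    rw [hmk, hw0, add_zero]
    have hmem : R.mkQ u ∈ Submodule.map R.mkQ (Submodule.span k (Set.range gen)) :=
      Submodule.mem_map_of_mem hu
    rw [Submodule.map_span, ← Set.range_comp] at hmem
    exact hmem
end

section
/- In the field K = ℚ(t, x, z) where z² = x(x−1)(x−t), with derivations ∂_x and ∂_t extending the standard derivations on ℚ(t,x) (so that ∂_x(z) and ∂_t(z) are determined by z² = x(x−1)(x−t)), the element b = 1/z satisfies D(b) = ∂_x(a), where D = −2t(t−1)∂_t² − (4t−2)∂_t − 1/2 and a = z/(x−t)². -/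
set_option maxHeartbeats 1000000


/-- in the field `K = ℚ(t,x,z)` with `z² = x(x−1)(x−t)` and the derivations
`∂_x, ∂_t` extending the standard ones (so `2z∂_x(z) = ∂_x(x(x−1)(x−t))` and
`2z∂_t(z) = −x(x−1)`), the element `b = 1/z` satisfies `D(b) = ∂_x(a)` with
`D = −2t(t−1)∂_t² − (4t−2)∂_t − 1/2` and `a = z/(x−t)²`.  (Formalized in any field of
characteristic zero containing such elements with such derivations.) -/
theorem stmt12 (K : Type*) [Field K] [CharZero K]
    (dx dt : Derivation ℤ K K) (x t z : K)
    (hxx : dx x = 1) (hxt : dx t = 0) (htx : dt x = 0) (htt : dt t = 1)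
    (hcomm : ∀ f : K, dx (dt f) = dt (dx f))
    (hz : z ^ 2 = x * (x - 1) * (x - t)) (hz0 : z ≠ 0) (hxt0 : x - t ≠ 0)
    (hdxz : 2 * z * dx z = dx (x * (x - 1) * (x - t)))
    (hdtz : 2 * z * dt z = -(x * (x - 1))) :
    -2 * t * (t - 1) * dt (dt z⁻¹) - (4 * t - 2) * dt z⁻¹ - (1 / 2) * z⁻¹ =
      dx (z * ((x - t) ^ 2)⁻¹) := by
  have h2 : (2 : K) ≠ 0 := two_ne_zero
  have hc : ∀ f : K, dt (x * (x-1)) = 0 := fun _ => by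
    rw [Derivation.leibniz]; simp [htx]
  have hdt2 : dt (2 : K) = 0 := by
    rw [show (2:K) = 1 + 1 by norm_num]; simp
  have h1 : dx (x * (x - 1) * (x - t)) = (x-1)*(x-t) + x*(x-t) + x*(x-1) := by
    rw [Derivation.leibniz, Derivation.leibniz]
    simp only [map_sub, Derivation.map_one_eq_zero, hxx, hxt, smul_eq_mul]; ring
  have hq : dx z = ((x-1)*(x-t) + x*(x-t) + x*(x-1)) / (2*z) := by
    rw [eq_div_iff (mul_ne_zero h2 hz0)]
    linear_combination hdxz + h1
  have hu : dt z = -(x*(x-1)) / (2*z) := by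
    rw [eq_div_iff (mul_ne_zero h2 hz0)]
    linear_combination hdtz
  have hz3 : z^3 ≠ 0 := pow_ne_zero _ hz0
  have hz5 : z^5 ≠ 0 := pow_ne_zero _ hz0
  have hx0 : x ≠ 0 := by
    intro h
    exact hz0 (pow_eq_zero_iff two_ne_zero |>.mp (by rw [hz, h]; ring))
  have hx1 : x - 1 ≠ 0 := by
    intro h
    exact hz0 (pow_eq_zero_iff two_ne_zero |>.mp (by rw [hz, h]; ring))
  have hinv : dt z⁻¹ = x*(x-1) / (2*z^3) := by
    rw [eq_div_iff (mul_ne_zero h2 hz3), Derivation.leibniz_inv, hu, smul_eq_mul]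
    field_simp
  have hinv2 : dt (dt z⁻¹) = 3*x^2*(x-1)^2 / (4*z^5) := by
    rw [hinv]
    rw [Derivation.leibniz_div, Derivation.leibniz, Derivation.leibniz,
      Derivation.leibniz_pow, hu, htx, hdt2]
    simp only [smul_eq_mul, map_sub, map_one, htx, Derivation.map_one_eq_zero]
    field_simp
    linear_combination (12*x^2 - 24*x^3 + 12*x^4) * z * (mul_inv_cancel₀ hz0)
  have hdxsq : dx ((x-t)^2) = 2*(x-t) := by
    rw [Derivation.leibniz_pow, map_sub, hxx, hxt]
    simp [smul_eq_mul]
  have hww : z * ((x - t) ^ 2)⁻¹ * (x-t)^2 = z := by field_simp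
  have key := congrArg dx hww
  rw [Derivation.leibniz, hdxsq] at key
  simp only [smul_eq_mul] at key
  have hic : ((x - t) ^ 2)⁻¹ * (x-t)^2 = 1 := inv_mul_cancel₀ (pow_ne_zero _ hxt0)
  have hR : dx (z * ((x - t) ^ 2)⁻¹) =
      (((x-1)*(x-t) + x*(x-t) + x*(x-1))*(x-t) - 4*(x*(x-1)*(x-t))) / (2*z*(x-t)^3) := by
    rw [eq_div_iff (mul_ne_zero (mul_ne_zero h2 hz0) (pow_ne_zero _ hxt0))]
    linear_combination (2*z*(x-t))*key + (2*z*(x-t))*hq +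
      (-4*(x-t)^2*((x-t)^2)⁻¹)*hz + (-4*(x*(x-1)*(x-t)))*hic +
      (3*x*t + 2*x*t^2 - 5*x^2*t - 2*x^2 + 3*x^3 - t^2) * (mul_inv_cancel₀ hz0)
  rw [hinv2, hinv, hR]
  field_simp
  linear_combination ((-4*((x-t)^2 + (x-t)*(2*x-1) - 3*(x*(x-1))))*(z^2 + x*(x-1)*(x-t)) + (-4*(x*(x-1))*(4*t-2)*(x-t)^2)) * hz
end
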